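/- Schur product theorem for the convolution: if S, T ∈ hom(𝓗₊₋) are positive semidefinite, then their convolution product S * T is positive semidefinite. -/

import Mathlib

open scoped ComplexInnerProductSpace ComplexOrder

/-- If an operator on a complex inner product space satisfies `0 ≤ ⟪w, S w⟫` for all `w`,
then it is nonnegative in the Loewner order. -/
lemma clm_nonneg_of_inner_nonneg {H : Type} [NormedAddCommGroup H] [InnerProductSpace ℂ H]
    [FiniteDimensional ℂ H] (S : H →L[ℂ] H) (hS : ∀ w : H, 0 ≤ ⟪w, S w⟫) : 0 ≤ S := by
  rw [ContinuousLinearMap.nonneg_iff_isPositive, ContinuousLinearMap.isPositive_iff_complex]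
  intro x
  have h := hS x
  rw [Complex.nonneg_iff] at h
  have heq : ⟪S x, x⟫ = ⟪x, S x⟫ := by
    rw [← inner_conj_symm]
    apply Complex.ext <;> simp only [Complex.conj_re, Complex.conj_im, ← h.2, neg_zero]
  rw [heq]
  exact ⟨by apply Complex.ext <;> simp [← h.2], h.1⟩

set_option synthInstance.maxHeartbeats 1000000 in
set_option maxHeartbeats 2000000 in
/-- **Schur product theorem for the convolution.** If `S ≥ 0` and `T ≥ 0` on
`𝓗₊₋`, then `S * T = Y (S ⊗ T) Y* ≥ 0`. -/
theorem convolution_schur_product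
{Hp Hm Hpm H2 : Type}
    [NormedAddCommGroup Hp] [InnerProductSpace ℂ Hp] [FiniteDimensional ℂ Hp]
    [NormedAddCommGroup Hm] [InnerProductSpace ℂ Hm] [FiniteDimensional ℂ Hm]
    [NormedAddCommGroup Hpm] [InnerProductSpace ℂ Hpm] [FiniteDimensional ℂ Hpm]
    [NormedAddCommGroup H2] [InnerProductSpace ℂ H2] [FiniteDimensional ℂ H2]
(θ : Hp ≃ₗ⋆[ℂ] Hm)
    (hθ : ∀ x x' : Hp, ⟪x, x'⟫ = ⟪θ x', θ x⟫)
(tpm : Hp →ₗ[ℂ] Hm →ₗ[ℂ] Hpm)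
    (htpm : ∀ (x : Hp) (y : Hm) (x' : Hp) (y' : Hm),
      ⟪tpm x y, tpm x' y'⟫ = ⟪x, x'⟫ * ⟪y, y'⟫)
    (hpm_span : ⊤ ≤ Submodule.span ℂ (Set.range fun p : Hp × Hm => tpm p.1 p.2))
(t2 : Hpm →ₗ[ℂ] Hpm →ₗ[ℂ] H2)
    (ht2 : ∀ (u v u' v' : Hpm), ⟪t2 u v, t2 u' v'⟫ = ⟪u, u'⟫ * ⟪v, v'⟫)
    (h2_span : ⊤ ≤ Submodule.span ℂ (Set.range fun p : Hpm × Hpm => t2 p.1 p.2))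
    (Y : H2 →L[ℂ] Hpm)
    (hY : ∀ (x₁ : Hp) (y₁ : Hm) (x₂ : Hp) (y₂ : Hm),
      Y (t2 (tpm x₁ y₁) (tpm x₂ y₂)) = ⟪θ.symm y₁, x₂⟫ • tpm x₁ y₂)
(tmap : (Hpm →L[ℂ] Hpm) → (Hpm →L[ℂ] Hpm) → (H2 →L[ℂ] H2))
    (htmap : ∀ (A B : Hpm →L[ℂ] Hpm) (u v : Hpm), tmap A B (t2 u v) = t2 (A u) (B v))
    (S T : Hpm →L[ℂ] Hpm)
    (hS : ∀ w : Hpm, 0 ≤ ⟪w, S w⟫) (hT : ∀ w : Hpm, 0 ≤ ⟪w, T w⟫) :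
    ∀ w : Hpm, 0 ≤ ⟪w, (Y ∘L tmap S T ∘L ContinuousLinearMap.adjoint Y) w⟫ := by
  -- square roots of S and T
  have hS' : 0 ≤ S := clm_nonneg_of_inner_nonneg S hS
  have hT' : 0 ≤ T := clm_nonneg_of_inner_nonneg T hT
  set A := CFC.sqrt S with hA
  set B := CFC.sqrt T with hB
  have hAsq : A * A = S := CFC.sqrt_mul_sqrt_self S hS'
  have hBsq : B * B = T := CFC.sqrt_mul_sqrt_self T hT'
  have hAsa : IsSelfAdjoint A :=
    ((ContinuousLinearMap.nonneg_iff_isPositive A).mp (CFC.sqrt_nonneg S)).isSelfAdjoint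
  have hBsa : IsSelfAdjoint B :=
    ((ContinuousLinearMap.nonneg_iff_isPositive B).mp (CFC.sqrt_nonneg T)).isSelfAdjoint
  set C := tmap A B with hC
  -- extensionality in H2 against the spanning set
  have ext_h2 : ∀ x y : H2, (∀ u v : Hpm, ⟪t2 u v, x⟫ = ⟪t2 u v, y⟫) → x = y := by
    intro x y hxy
    have hz : ∀ z : H2, ⟪z, x - y⟫ = 0 := by
      intro z
      have hz' : z ∈ Submodule.span ℂ (Set.range fun p : Hpm × Hpm => t2 p.1 p.2) :=
        h2_span trivial
      induction hz' using Submodule.span_induction with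
      | mem z hz =>
        obtain ⟨p, rfl⟩ := hz
        rw [inner_sub_right, hxy p.1 p.2, sub_self]
      | zero => simp
      | add a b _ _ ha hb => rw [inner_add_left, ha, hb, add_zero]
      | smul c a _ ha => rw [inner_smul_left, ha, mul_zero]
    have := hz (x - y)
    rw [inner_self_eq_zero] at this
    exact sub_eq_zero.mp this
  -- the key identity: tmap S T = C† ∘ C pointwise
  have key : ∀ z : H2, tmap S T z = (ContinuousLinearMap.adjoint C) (C z) := by
    intro z
    have hz' : z ∈ Submodule.span ℂ (Set.range fun p : Hpm × Hpm => t2 p.1 p.2) :=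
      h2_span trivial
    induction hz' using Submodule.span_induction with
    | mem z hz =>
      obtain ⟨⟨u, v⟩, rfl⟩ := hz
      apply ext_h2
      intro u' v'
      rw [htmap, ht2, ContinuousLinearMap.adjoint_inner_right, hC, htmap, htmap, ht2]
      have hAu : ∀ a b : Hpm, ⟪A a, A b⟫ = ⟪a, S b⟫ := by
        intro a b
        rw [← ContinuousLinearMap.adjoint_inner_right, hAsa.adjoint_eq]
        have : A (A b) = S b := by rw [← hAsq]; rfl
        rw [this]
      have hBu : ∀ a b : Hpm, ⟪B a, B b⟫ = ⟪a, T b⟫ := by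
        intro a b
        rw [← ContinuousLinearMap.adjoint_inner_right, hBsa.adjoint_eq]
        have : B (B b) = T b := by rw [← hBsq]; rfl
        rw [this]
      rw [hAu, hBu]
    | zero => simp
    | add a b _ _ ha hb => rw [map_add, ha, hb, map_add, map_add]
    | smul c a _ ha => rw [map_smul, ha, map_smul, map_smul]
  intro w
  rw [ContinuousLinearMap.comp_apply, ContinuousLinearMap.comp_apply,
    ← ContinuousLinearMap.adjoint_inner_left Y, key,
    ContinuousLinearMap.adjoint_inner_right]
  rw [inner_self_eq_norm_sq_to_K]
  positivity
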